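/- arXiv:2006.05463 — 2 statements merged into one kernel-verified Lean document; each statement's English description precedes it below -/
import Mathlib

section
/- For every trace s ∈ Act* and every k ≥ 0, the equation O2_{s,k}: x + s.x + s̄^(k)(yes + no) = x + s̄^(k)(yes + no) is sound with respect to verdict equivalence, i.e., for every closed substitution σ, σ(x + s.x + s̄^(k)(yes+no)) ≃ σ(x + s̄^(k)(yes+no)). -/
/-- Recursion-free regular monitors (with variables). -/
inductive Mon (Act : Type) : Type
  | end_ : Mon Act
  | yes : Mon Act
  | no : Mon Act
  | act : Act → Mon Act → Mon Act
  | plus : Mon Act → Mon Act → Mon Act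
  | var : ℕ → Mon Act

variable {Act : Type}

/-- Verdicts: `end`, `yes`, `no`. -/
inductive IsVerdict : Mon Act → Prop
  | end_ : IsVerdict Mon.end_
  | yes : IsVerdict Mon.yes
  | no : IsVerdict Mon.no

/-- Labelled transition relation; `none` is the silent action τ. -/
inductive Step : Mon Act → Option Act → Mon Act → Prop
  | act (a : Act) (m : Mon Act) : Step (Mon.act a m) (some a) m
  | plusL {m n m' : Mon Act} {α : Option Act} : Step m α m' → Step (Mon.plus m n) α m'
  | plusR {m n n' : Mon Act} {α : Option Act} : Step n α n' → Step (Mon.plus m n) α n'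
  | verdict {v : Mon Act} {α : Option Act} : IsVerdict v → Step v α v

/-- Reflexive-transitive closure of τ-steps. -/
def TauStar (m n : Mon Act) : Prop :=
  Relation.ReflTransGen (fun p q => Step p none q) m n

/-- Strong transition along a finite trace. -/
inductive Trace : Mon Act → List Act → Mon Act → Prop
  | refl (m : Mon Act) : Trace m [] m
  | cons {m m' m'' : Mon Act} {a : Act} {s : List Act} :
      Step m (some a) m' → Trace m' s m'' → Trace m (a :: s) m''

/-- Weak transition along a finite trace (τ-steps allowed throughout). -/
inductive WTrace : Mon Act → List Act → Mon Act → Prop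
  | nil {m m' : Mon Act} : TauStar m m' → WTrace m [] m'
  | cons {m m₁ m₂ m' : Mon Act} {a : Act} {s : List Act} :
      TauStar m m₁ → Step m₁ (some a) m₂ → WTrace m₂ s m' → WTrace m (a :: s) m'

/-- Acceptance language. -/
def La (m : Mon Act) : Set (List Act) := {s | WTrace m s Mon.yes}

/-- Rejection language. -/
def Lr (m : Mon Act) : Set (List Act) := {s | WTrace m s Mon.no}

/-- Verdict equivalence. -/
def VerdEq (m n : Mon Act) : Prop := La m = La n ∧ Lr m = Lr n

/-- `A · Act^ω`: infinite words having a finite prefix in `A`. -/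
def omegaCl (A : Set (List Act)) : Set (ℕ → Act) :=
  {w | ∃ n : ℕ, (List.range n).map w ∈ A}

/-- ω-verdict equivalence. -/
def OmegaEq (m n : Mon Act) : Prop :=
  omegaCl (La m) = omegaCl (La n) ∧ omegaCl (Lr m) = omegaCl (Lr n)

/-- Closed monitors: no variables. -/
def Closed : Mon Act → Prop
  | Mon.act _ m => Closed m
  | Mon.plus m n => Closed m ∧ Closed n
  | Mon.var _ => False
  | _ => True

/-- `yes` occurs as a subterm. -/
def HasYes : Mon Act → Prop
  | Mon.yes => True
  | Mon.act _ m => HasYes m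
  | Mon.plus m n => HasYes m ∨ HasYes n
  | _ => False

/-- `no` occurs as a subterm. -/
def HasNo : Mon Act → Prop
  | Mon.no => True
  | Mon.act _ m => HasNo m
  | Mon.plus m n => HasNo m ∨ HasNo n
  | _ => False

/-- Syntactic depth. -/
def depth : Mon Act → ℕ
  | Mon.act _ m => depth m + 1
  | Mon.plus m n => max (depth m) (depth n)
  | _ => 0

/-- Applying a substitution. -/
def msubst (σ : ℕ → Mon Act) : Mon Act → Mon Act
  | Mon.var x => σ x
  | Mon.act a m => Mon.act a (msubst σ m)
  | Mon.plus m n => Mon.plus (msubst σ m) (msubst σ n)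
  | m => m

/-- Equational derivability from an axiom set `E`. -/
inductive Deriv (E : Mon Act → Mon Act → Prop) : Mon Act → Mon Act → Prop
  | ax {m n} : E m n → Deriv E m n
  | refl (m) : Deriv E m m
  | symm {m n} : Deriv E m n → Deriv E n m
  | trans {m n p} : Deriv E m n → Deriv E n p → Deriv E m p
  | act (a : Act) {m n} : Deriv E m n → Deriv E (Mon.act a m) (Mon.act a n)
  | plus {m m' n n'} : Deriv E m m' → Deriv E n n' → Deriv E (Mon.plus m n) (Mon.plus m' n')
  | subst (σ : ℕ → Mon Act) {m n} : Deriv E m n → Deriv E (msubst σ m) (msubst σ n)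

def vx : Mon Act := Mon.var 0
def vy : Mon Act := Mon.var 1
def vz : Mon Act := Mon.var 2

/-- The axiom system `E_v`. -/
inductive EvAx : Mon Act → Mon Act → Prop
  | A1 : EvAx (Mon.plus vx vy) (Mon.plus vy vx)
  | A2 : EvAx (Mon.plus vx (Mon.plus vy vz)) (Mon.plus (Mon.plus vx vy) vz)
  | A3 : EvAx (Mon.plus vx vx) vx
  | A4 : EvAx (Mon.plus vx Mon.end_) vx
  | Ea (a : Act) : EvAx (Mon.act a Mon.end_) Mon.end_
  | Ya (a : Act) : EvAx Mon.yes (Mon.plus Mon.yes (Mon.act a Mon.yes))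
  | Na (a : Act) : EvAx Mon.no (Mon.plus Mon.no (Mon.act a Mon.no))
  | Da (a : Act) : EvAx (Mon.act a (Mon.plus vx vy)) (Mon.plus (Mon.act a vx) (Mon.act a vy))

/-- Sum of a list of monitors (`end` for the empty sum). -/
def sumList : List (Mon Act) → Mon Act
  | [] => Mon.end_
  | [m] => m
  | m :: ms => Mon.plus m (sumList ms)

/-- `s.m`: the monitor performing exactly the actions of `s` and then behaving as `m`. -/
def prefixMon (s : List Act) (m : Mon Act) : Mon Act :=
  List.foldr Mon.act m s

/-- Build `Σ_{(a,m)∈l} a.m [+ yes] [+ no]`. -/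
def buildNF (l : List (Act × Mon Act)) (hy hn : Bool) : Mon Act :=
  sumList (l.map (fun p => Mon.act p.1 p.2) ++
    (if hy then [Mon.yes] else []) ++ (if hn then [Mon.no] else []))

/-- Normal forms for closed monitors. -/
inductive NF : Mon Act → Prop
  | mk (l : List (Act × Mon Act)) (hy hn : Bool) :
      (l.map Prod.fst).Nodup →
      (∀ p ∈ l, p.2 ≠ Mon.end_) →
      (∀ p ∈ l, NF p.2) →
      NF (buildNF l hy hn)

/-- Build `Σ_{(a,m)∈l} a.m + Σ_{x∈vs} x [+ yes] [+ no]`. -/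
def buildONF (l : List (Act × Mon Act)) (vs : List ℕ) (hy hn : Bool) : Mon Act :=
  sumList (l.map (fun p => Mon.act p.1 p.2) ++ vs.map Mon.var ++
    (if hy then [Mon.yes] else []) ++ (if hn then [Mon.no] else []))

/-- Open normal forms. -/
inductive ONF : Mon Act → Prop
  | mk (l : List (Act × Mon Act)) (vs : List ℕ) (hy hn : Bool) :
      (l.map Prod.fst).Nodup → vs.Nodup →
      (∀ p ∈ l, p.2 ≠ Mon.end_) →
      (∀ p ∈ l, ONF p.2) →
      ONF (buildONF l vs hy hn)

/-- `s^i`: the `i`-fold concatenation of `s`. -/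
def spow (s : List Act) (i : ℕ) : List Act := (List.replicate i s).flatten

/-- All traces of length exactly `n` over the alphabet listed by `L`. -/
def tuples (L : List Act) : ℕ → List (List Act)
  | 0 => [[]]
  | n + 1 => (tuples L n).flatMap (fun t => L.map (fun a => a :: t))

/-- All traces of length at most `n`. -/
def allUpTo (L : List Act) (n : ℕ) : List (List Act) :=
  (List.range (n + 1)).flatMap (tuples L)

/-- `s̄^≤(m)`: sum of `s'.m` over traces `s'` with `|s'| ≤ |s|` that are not prefixes of `s`. -/
def sbarLe [DecidableEq Act] (L : List Act) (s : List Act) (m : Mon Act) : Mon Act :=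
  sumList (((allUpTo L s.length).filter (fun t => !(t.isPrefixOf s))).map
    (fun t => prefixMon t m))

/-- `s̄(m) = s̄^≤(m) + s.Σ_{a∈Act} a.m`. -/
def sbar [DecidableEq Act] (L : List Act) (s : List Act) (m : Mon Act) : Mon Act :=
  Mon.plus (sbarLe L s m) (prefixMon s (sumList (L.map fun a => Mon.act a m)))

/-- `s̄^(k)(m)`. -/
def sbarK [DecidableEq Act] (L : List Act) (s : List Act) (m : Mon Act) : ℕ → Mon Act
  | 0 => sbar L s m
  | 1 => sbar L s m
  | k + 2 =>
      Mon.plus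
        (sumList ((List.range k).map (fun i => prefixMon (spow s (i + 1)) (sbarLe L s m))))
        (prefixMon (spow s (k + 1)) (sbar L s m))

/-! ### Auxiliary development for stmt17 -/

section Stmt17Aux

/-- Acceptance predicate (`b = true` for `yes`, `b = false` for `no`). -/
def MAcc (b : Bool) : Mon Act → List Act → Prop
  | Mon.yes, _ => b = true
  | Mon.no, _ => b = false
  | Mon.act a m, t => ∃ r, t = a :: r ∧ MAcc b m r
  | Mon.plus m n, t => MAcc b m t ∨ MAcc b n t
  | Mon.end_, _ => False
  | Mon.var _, _ => False

@[simp] lemma Acc_yes (b : Bool) (t : List Act) : MAcc b Mon.yes t ↔ b = true := Iff.rfl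
@[simp] lemma Acc_no (b : Bool) (t : List Act) : MAcc b Mon.no t ↔ b = false := Iff.rfl
@[simp] lemma Acc_end (b : Bool) (t : List Act) : MAcc b (Mon.end_ : Mon Act) t ↔ False := Iff.rfl
@[simp] lemma Acc_var (b : Bool) (x : ℕ) (t : List Act) : MAcc b (Mon.var x : Mon Act) t ↔ False := Iff.rfl
@[simp] lemma Acc_act (b : Bool) (a : Act) (m : Mon Act) (t : List Act) :
    MAcc b (Mon.act a m) t ↔ ∃ r, t = a :: r ∧ MAcc b m r := Iff.rfl
@[simp] lemma Acc_plus (b : Bool) (m n : Mon Act) (t : List Act) :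
    MAcc b (Mon.plus m n) t ↔ MAcc b m t ∨ MAcc b n t := Iff.rfl

@[simp] lemma Acc_yn (b : Bool) (t : List Act) :
    MAcc b (Mon.plus Mon.yes Mon.no : Mon Act) t := by cases b <;> simp

/-- The verdict associated to `b`. -/
def verd (b : Bool) : Mon Act := if b then Mon.yes else Mon.no

lemma isVerdict_verd (b : Bool) : IsVerdict (verd b : Mon Act) := by
  cases b <;> exact (by constructor)

lemma acc_verd_self (b : Bool) (t : List Act) : MAcc b (verd b : Mon Act) t := by
  cases b <;> simp [verd]

/-- Verdicts can perform any trace staying at themselves. -/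
lemma wtrace_verdict {v : Mon Act} (hv : IsVerdict v) : ∀ u, WTrace v u v
  | [] => WTrace.nil Relation.ReflTransGen.refl
  | _ :: u => WTrace.cons Relation.ReflTransGen.refl (Step.verdict hv) (wtrace_verdict hv u)

lemma step_acc_tau {b : Bool} {m p : Mon Act} (h : Step m none p) :
    ∀ {t : List Act}, MAcc b p t → MAcc b m t := by
  intro t
  generalize hα : (none : Option Act) = α at h
  induction h with
  | act => cases hα
  | plusL _ ih => exact fun hp => Or.inl (ih hα hp)
  | plusR _ ih => exact fun hp => Or.inr (ih hα hp)
  | verdict _ => exact id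

lemma tauStar_acc {b : Bool} {m p : Mon Act} (h : TauStar m p) {t : List Act}
    (hp : MAcc b p t) : MAcc b m t := by
  induction h using Relation.ReflTransGen.head_induction_on with
  | refl => exact hp
  | head hstep _ ih => exact step_acc_tau hstep ih

lemma step_acc_act {b : Bool} {m p : Mon Act} {a : Act} (h : Step m (some a) p) :
    ∀ {t : List Act}, MAcc b p t → MAcc b m (a :: t) := by
  generalize hα : (some a : Option Act) = α at h
  induction h with
  | act =>
      cases hα
      exact fun hp => ⟨_, rfl, hp⟩
  | plusL _ ih => exact fun hp => Or.inl (ih hα hp)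
  | plusR _ ih => exact fun hp => Or.inr (ih hα hp)
  | verdict hv =>
      intro t hp
      cases hv with
      | end_ => exact hp.elim
      | yes => exact hp
      | no => exact hp

lemma wtrace_acc {b : Bool} {m v : Mon Act} {t : List Act} (h : WTrace m t v)
    (hv : v = verd b) : MAcc b m t := by
  induction h with
  | nil hts => exact tauStar_acc hts (hv ▸ acc_verd_self b [])
  | cons hts hstep _ ih => exact tauStar_acc hts (step_acc_act hstep (ih hv))

lemma wtrace_plus_left {m n v : Mon Act} {t : List Act} (hv : IsVerdict v)
    (h : WTrace m t v) : WTrace (Mon.plus m n) t v := by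
  cases h with
  | nil hts =>
      rcases Relation.ReflTransGen.cases_head hts with rfl | ⟨p, hstep, hts'⟩
      · exact WTrace.nil (Relation.ReflTransGen.single (Step.plusL (Step.verdict hv)))
      · exact WTrace.nil (Relation.ReflTransGen.head (Step.plusL hstep) hts')
  | cons hts hstep hrest =>
      rcases Relation.ReflTransGen.cases_head hts with rfl | ⟨p, hstep', hts'⟩
      · exact WTrace.cons Relation.ReflTransGen.refl (Step.plusL hstep) hrest
      · exact WTrace.cons (Relation.ReflTransGen.head (Step.plusL hstep') hts') hstep hrest

lemma wtrace_plus_right {m n v : Mon Act} {t : List Act} (hv : IsVerdict v)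
    (h : WTrace n t v) : WTrace (Mon.plus m n) t v := by
  cases h with
  | nil hts =>
      rcases Relation.ReflTransGen.cases_head hts with rfl | ⟨p, hstep, hts'⟩
      · exact WTrace.nil (Relation.ReflTransGen.single (Step.plusR (Step.verdict hv)))
      · exact WTrace.nil (Relation.ReflTransGen.head (Step.plusR hstep) hts')
  | cons hts hstep hrest =>
      rcases Relation.ReflTransGen.cases_head hts with rfl | ⟨p, hstep', hts'⟩
      · exact WTrace.cons Relation.ReflTransGen.refl (Step.plusR hstep) hrest
      · exact WTrace.cons (Relation.ReflTransGen.head (Step.plusR hstep') hts') hstep hrest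

lemma acc_wtrace {b : Bool} : ∀ {m : Mon Act} {t : List Act}, MAcc b m t → WTrace m t (verd b)
  | Mon.yes, t, h => by
      cases b with
      | false => cases h
      | true => exact wtrace_verdict IsVerdict.yes t
  | Mon.no, t, h => by
      cases b with
      | true => cases h
      | false => exact wtrace_verdict IsVerdict.no t
  | Mon.end_, _, h => h.elim
  | Mon.var _, _, h => h.elim
  | Mon.act a m, _, ⟨r, rfl, hr⟩ =>
      WTrace.cons Relation.ReflTransGen.refl (Step.act a m) (acc_wtrace hr)
  | Mon.plus m n, t, h =>
      h.elim (fun h' => wtrace_plus_left (isVerdict_verd b) (acc_wtrace h'))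
        (fun h' => wtrace_plus_right (isVerdict_verd b) (acc_wtrace h'))

lemma wtrace_iff_acc {b : Bool} {m : Mon Act} {t : List Act} :
    WTrace m t (verd b) ↔ MAcc b m t :=
  ⟨fun h => wtrace_acc h rfl, acc_wtrace⟩

lemma MAcc_ext {b : Bool} : ∀ {m : Mon Act} {t : List Act} (u : List Act),
    MAcc b m t → MAcc b m (t ++ u)
  | Mon.yes, _, _, h => h
  | Mon.no, _, _, h => h
  | Mon.end_, _, _, h => h.elim
  | Mon.var _, _, _, h => h.elim
  | Mon.act _ _, _, u, ⟨r, rfl, hr⟩ => ⟨r ++ u, rfl, MAcc_ext u hr⟩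
  | Mon.plus _ _, _, u, h =>
      h.elim (fun h' => Or.inl (MAcc_ext u h')) (fun h' => Or.inr (MAcc_ext u h'))

lemma MAcc_sumList {b : Bool} : ∀ (l : List (Mon Act)) (t : List Act),
    MAcc b (sumList l) t ↔ ∃ m ∈ l, MAcc b m t
  | [], t => by simp [sumList]
  | [m], t => by simp [sumList]
  | m :: m' :: ms, t => by
      rw [show sumList (m :: m' :: ms) = Mon.plus m (sumList (m' :: ms)) from rfl]
      simp [MAcc_sumList (m' :: ms) t]

@[simp] lemma prefixMon_nil (m : Mon Act) : prefixMon [] m = m := rfl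
@[simp] lemma prefixMon_cons (a : Act) (u : List Act) (m : Mon Act) :
    prefixMon (a :: u) m = Mon.act a (prefixMon u m) := rfl

lemma prefixMon_append (u v : List Act) (m : Mon Act) :
    prefixMon (u ++ v) m = prefixMon u (prefixMon v m) := List.foldr_append ..

lemma MAcc_prefixMon {b : Bool} (m : Mon Act) : ∀ (u t : List Act),
    MAcc b (prefixMon u m) t ↔ ∃ r, t = u ++ r ∧ MAcc b m r
  | [], t => by simp
  | a :: u, t => by
      simp only [prefixMon_cons, Acc_act]
      constructor
      · rintro ⟨r, rfl, hr⟩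
        rcases (MAcc_prefixMon m u r).1 hr with ⟨r', rfl, hr'⟩
        exact ⟨r', rfl, hr'⟩
      · rintro ⟨r, rfl, hr⟩
        exact ⟨u ++ r, rfl, (MAcc_prefixMon m u (u ++ r)).2 ⟨r, rfl, hr⟩⟩

@[simp] lemma spow_zero (s : List Act) : spow s 0 = [] := rfl

lemma spow_succ (s : List Act) (j : ℕ) : spow s (j + 1) = s ++ spow s j := by
  simp [spow, List.replicate_succ]

lemma spow_succ' (s : List Act) (j : ℕ) : spow s (j + 1) = spow s j ++ s := by
  simp [spow, List.replicate_succ']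

lemma mem_tuples {L : List Act} (hL : ∀ a, a ∈ L) : ∀ (n : ℕ) (u : List Act),
    u ∈ tuples L n ↔ u.length = n
  | 0, u => by simp [tuples, List.length_eq_zero_iff]
  | n + 1, u => by
      simp only [tuples, List.mem_flatMap, List.mem_map]
      constructor
      · rintro ⟨t, ht, a, _, rfl⟩
        simp [(mem_tuples hL n t).1 ht]
      · intro h
        cases u with
        | nil => simp at h
        | cons a u =>
            exact ⟨u, (mem_tuples hL n u).2 (by simpa using h), a, hL a, rfl⟩

lemma mem_allUpTo {L : List Act} (hL : ∀ a, a ∈ L) (n : ℕ) (u : List Act) :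
    u ∈ allUpTo L n ↔ u.length ≤ n := by
  simp only [allUpTo, List.mem_flatMap, List.mem_range, mem_tuples hL]
  exact ⟨fun ⟨i, hi, h⟩ => by omega, fun h => ⟨u.length, by omega, rfl⟩⟩

lemma MAcc_sbarLe [DecidableEq Act] {b : Bool} {L : List Act} (hL : ∀ a, a ∈ L)
    (s t : List Act) :
    MAcc b (sbarLe L s (Mon.plus Mon.yes Mon.no)) t ↔
      ∃ u, u.length ≤ s.length ∧ ¬ u <+: s ∧ u <+: t := by
  simp only [sbarLe, MAcc_sumList, List.mem_map, List.mem_filter, mem_allUpTo hL]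
  constructor
  · rintro ⟨m, ⟨u, ⟨hu1, hu2⟩, rfl⟩, hm⟩
    rcases (MAcc_prefixMon _ u t).1 hm with ⟨r, rfl, -⟩
    refine ⟨u, hu1, ?_, ⟨r, rfl⟩⟩
    rw [← List.isPrefixOf_iff_prefix]
    simp only [Bool.not_eq_true'] at hu2
    simp [hu2]
  · rintro ⟨u, h1, h2, r, rfl⟩
    refine ⟨prefixMon u (Mon.plus Mon.yes Mon.no), ⟨u, ⟨h1, ?_⟩, rfl⟩, ?_⟩
    · have hf : u.isPrefixOf s = false := by
        rw [← Bool.not_eq_true, List.isPrefixOf_iff_prefix]; exact h2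
      simp [hf]
    · exact (MAcc_prefixMon _ u _).2 ⟨r, rfl, Acc_yn b r⟩

lemma MAcc_sbar_of [DecidableEq Act] {b : Bool} {L : List Act} (hL : ∀ a, a ∈ L)
    (s : List Act) {t' : List Act} (ht' : t' ≠ []) :
    MAcc b (sbar L s (Mon.plus Mon.yes Mon.no)) (s ++ t') := by
  rcases List.exists_cons_of_ne_nil ht' with ⟨a, t₂, rfl⟩
  simp only [sbar, Acc_plus]
  refine Or.inr ?_
  refine (MAcc_prefixMon _ s _).2 ⟨a :: t₂, rfl, ?_⟩
  refine (MAcc_sumList _ _).2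
    ⟨Mon.act a (Mon.plus Mon.yes Mon.no), List.mem_map.2 ⟨a, hL a, rfl⟩, ?_⟩
  exact ⟨t₂, rfl, Acc_yn b t₂⟩

lemma sbarK_add_two [DecidableEq Act] (L s : List Act) (m : Mon Act) (k : ℕ) :
    sbarK L s m (k + 2) =
      Mon.plus
        (sumList ((List.range k).map (fun i => prefixMon (spow s (i + 1)) (sbarLe L s m))))
        (prefixMon (spow s (k + 1)) (sbar L s m)) := rfl

lemma sbarK_one [DecidableEq Act] (L s : List Act) (m : Mon Act) :
    sbarK L s m 1 = sbar L s m := rfl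

lemma sbarK_zero [DecidableEq Act] (L s : List Act) (m : Mon Act) :
    sbarK L s m 0 = sbar L s m := rfl

lemma MAcc_sbarK_lift [DecidableEq Act] {b : Bool} {L : List Act} (s t' : List Act) :
    ∀ n : ℕ, MAcc b (sbarK L s (Mon.plus Mon.yes Mon.no) (n + 1)) t' →
      MAcc b (sbarK L s (Mon.plus Mon.yes Mon.no) (n + 2)) (s ++ t')
  | 0, h => by
      rw [sbarK_one] at h
      rw [sbarK_add_two]
      refine Or.inr ?_
      rw [spow_succ, spow_zero, List.append_nil]
      exact (MAcc_prefixMon _ s _).2 ⟨t', rfl, h⟩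
  | n + 1, h => by
      rw [sbarK_add_two] at h
      rw [sbarK_add_two]
      simp only [Acc_plus, MAcc_sumList, List.mem_map, List.mem_range] at h ⊢
      rcases h with ⟨m, ⟨i, hi, rfl⟩, hm⟩ | h
      · refine Or.inl ⟨prefixMon (spow s (i + 2)) (sbarLe L s _), ⟨i + 1, by omega, rfl⟩, ?_⟩
        rw [show i + 2 = (i + 1) + 1 from rfl, spow_succ s (i + 1), prefixMon_append]
        exact (MAcc_prefixMon _ s _).2 ⟨t', rfl, hm⟩
      · refine Or.inr ?_
        rw [spow_succ s (n + 1), prefixMon_append]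
        exact (MAcc_prefixMon _ s _).2 ⟨t', rfl, h⟩

lemma prefix_of_spow_prefix {s t' : List Act} {j : ℕ} (h : t' <+: spow s j) :
    t' <+: s ++ t' := by
  have h1 : t' <+: spow s (j + 1) := by
    refine h.trans ?_
    rw [spow_succ']
    exact List.prefix_append _ _
  have h2 : s ++ t' <+: spow s (j + 1) := by
    rw [spow_succ]
    exact (List.prefix_append_right_inj s).2 h
  exact List.prefix_of_prefix_length_le h1 h2 (by simp)

lemma MAcc_sbarK_key [DecidableEq Act] {b : Bool} {L : List Act} (hL : ∀ a, a ∈ L)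
    (s : List Act) :
    ∀ (k : ℕ) (t' : List Act), t' ≠ [] → ¬ (s ++ t') <+: spow s (max k 1) →
      MAcc b (sbarK L s (Mon.plus Mon.yes Mon.no) k) (s ++ t')
  | 0, t', ht, _ => MAcc_sbar_of hL s ht
  | 1, t', ht, _ => MAcc_sbar_of hL s ht
  | (n + 2), t', ht, hpre => by
      rw [show max (n + 2) 1 = n + 2 by omega] at hpre
      by_cases hus : t'.take s.length <+: s
      · by_cases hlen : t'.length ≤ s.length
        · exfalso
          apply hpre
          have ht's : t' <+: s := by rwa [List.take_of_length_le hlen] at hus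
          refine ((List.prefix_append_right_inj s).2 ht's).trans ?_
          rw [spow_succ, spow_succ]
          exact (List.prefix_append_right_inj s).2 (List.prefix_append s _)
        · push_neg at hlen
          have hlq : (t'.take s.length).length = s.length := by
            rw [List.length_take]; omega
          have husq : t'.take s.length = s := hus.eq_of_length hlq
          have hdecomp : t' = s ++ t'.drop s.length := by
            conv_lhs => rw [← List.take_append_drop s.length t']
            rw [husq]
          have hdne : t'.drop s.length ≠ [] := by
            intro h0
            have h1 := congrArg List.length h0
            simp only [List.length_drop, List.length_nil] at h1
            omega
          have hpre' : ¬ (s ++ t'.drop s.length) <+: spow s (max (n + 1) 1) := by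
            rw [show max (n + 1) 1 = n + 1 by omega]
            intro hc
            rw [← hdecomp] at hc
            apply hpre
            rw [spow_succ]
            exact (List.prefix_append_right_inj s).2 hc
          have ih := MAcc_sbarK_key (b := b) hL s (n + 1) (t'.drop s.length) hdne hpre'
          rw [← hdecomp] at ih
          exact MAcc_sbarK_lift s t' n ih
      · have hsl : MAcc b (sbarLe L s (Mon.plus Mon.yes Mon.no)) t' :=
          (MAcc_sbarLe hL s t').2
            ⟨t'.take s.length, by rw [List.length_take]; omega, hus, List.take_prefix _ _⟩
        cases n with
        | zero =>
            rw [sbarK_add_two]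
            refine Or.inr ?_
            refine (MAcc_prefixMon _ _ _).2 ⟨t', by rw [spow_succ, spow_zero]; simp, ?_⟩
            exact Or.inl hsl
        | succ m =>
            rw [sbarK_add_two]
            refine Or.inl ?_
            refine (MAcc_sumList _ _).2
              ⟨prefixMon (spow s 1) (sbarLe L s _), List.mem_map.2 ⟨0, by simp, rfl⟩, ?_⟩
            exact (MAcc_prefixMon _ _ _).2 ⟨t', by rw [spow_succ, spow_zero]; simp, hsl⟩

lemma msubst_closed (σ : ℕ → Mon Act) : ∀ {m : Mon Act}, Closed m → msubst σ m = m
  | Mon.end_, _ => rfl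
  | Mon.yes, _ => rfl
  | Mon.no, _ => rfl
  | Mon.var _, h => h.elim
  | Mon.act a m, h => by
      rw [msubst, msubst_closed σ (show Closed m from h)]
  | Mon.plus m n, h => by
      rw [msubst, msubst_closed σ (show Closed m from h.1),
        msubst_closed σ (show Closed n from h.2)]

lemma closed_sumList : ∀ {l : List (Mon Act)}, (∀ m ∈ l, Closed m) → Closed (sumList l)
  | [], _ => trivial
  | [m], h => h m (by simp)
  | _ :: _ :: _, h =>
      ⟨h _ (by simp), closed_sumList (fun x hx => h x (List.mem_cons_of_mem _ hx))⟩

lemma closed_prefixMon {m : Mon Act} (hm : Closed m) : ∀ u : List Act, Closed (prefixMon u m)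
  | [] => hm
  | _ :: u => closed_prefixMon hm u

lemma closed_yn : Closed (Mon.plus Mon.yes Mon.no : Mon Act) := ⟨trivial, trivial⟩

lemma closed_sbarLe [DecidableEq Act] (L s : List Act) :
    Closed (sbarLe L s (Mon.plus Mon.yes Mon.no)) := by
  refine closed_sumList ?_
  intro m hm
  rcases List.mem_map.1 hm with ⟨u, -, rfl⟩
  exact closed_prefixMon closed_yn u

lemma closed_sbar [DecidableEq Act] (L s : List Act) :
    Closed (sbar L s (Mon.plus Mon.yes Mon.no)) := by
  refine ⟨closed_sbarLe L s, closed_prefixMon ?_ s⟩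
  refine closed_sumList ?_
  intro m hm
  rcases List.mem_map.1 hm with ⟨a, -, rfl⟩
  exact closed_yn

lemma closed_sbarK [DecidableEq Act] (L s : List Act) :
    ∀ k : ℕ, Closed (sbarK L s (Mon.plus Mon.yes Mon.no) k)
  | 0 => closed_sbar L s
  | 1 => closed_sbar L s
  | _ + 2 => by
      rw [sbarK_add_two]
      refine ⟨closed_sumList ?_, closed_prefixMon (closed_sbar L s) _⟩
      intro m hm
      rcases List.mem_map.1 hm with ⟨i, -, rfl⟩
      exact closed_prefixMon (closed_sbarLe L s) _

lemma msubst_prefixMon (σ : ℕ → Mon Act) (m : Mon Act) :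
    ∀ u : List Act, msubst σ (prefixMon u m) = prefixMon u (msubst σ m)
  | [] => rfl
  | a :: u => by rw [prefixMon_cons, msubst, msubst_prefixMon σ m u, prefixMon_cons]

end Stmt17Aux

/-- soundness of the axioms `O2_{s,k}` with respect to verdict
equivalence, over a finite alphabet. -/
theorem stmt17 [Fintype Act] [DecidableEq Act] (s : List Act) (k : ℕ)
    (σ : ℕ → Mon Act) (hσ : ∀ v, Closed (σ v)) :
    VerdEq
      (msubst σ (Mon.plus (Mon.plus vx (prefixMon s vx))
        (sbarK (Finset.univ : Finset Act).toList s (Mon.plus Mon.yes Mon.no) k)))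
      (msubst σ (Mon.plus vx
        (sbarK (Finset.univ : Finset Act).toList s (Mon.plus Mon.yes Mon.no) k))) := by
  have hL : ∀ a : Act, a ∈ (Finset.univ : Finset Act).toList := fun a => by simp
  have hmK : msubst σ (sbarK (Finset.univ : Finset Act).toList s (Mon.plus Mon.yes Mon.no) k)
      = sbarK (Finset.univ : Finset Act).toList s (Mon.plus Mon.yes Mon.no) k :=
    msubst_closed σ (closed_sbarK _ s k)
  have e1 : msubst σ (Mon.plus (Mon.plus vx (prefixMon s vx))
        (sbarK (Finset.univ : Finset Act).toList s (Mon.plus Mon.yes Mon.no) k))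
      = Mon.plus (Mon.plus (σ 0) (prefixMon s (σ 0)))
        (sbarK (Finset.univ : Finset Act).toList s (Mon.plus Mon.yes Mon.no) k) := by
    rw [msubst, msubst, hmK, msubst_prefixMon]
    rfl
  have e2 : msubst σ (Mon.plus vx
        (sbarK (Finset.univ : Finset Act).toList s (Mon.plus Mon.yes Mon.no) k))
      = Mon.plus (σ 0)
        (sbarK (Finset.univ : Finset Act).toList s (Mon.plus Mon.yes Mon.no) k) := by
    rw [msubst, hmK]
    rfl
  rw [e1, e2]
  have main : ∀ (b : Bool) (t : List Act),
      MAcc b (Mon.plus (Mon.plus (σ 0) (prefixMon s (σ 0)))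
        (sbarK (Finset.univ : Finset Act).toList s (Mon.plus Mon.yes Mon.no) k)) t ↔
      MAcc b (Mon.plus (σ 0)
        (sbarK (Finset.univ : Finset Act).toList s (Mon.plus Mon.yes Mon.no) k)) t := by
    intro b t
    simp only [Acc_plus]
    constructor
    · rintro ((hx | hpx) | hK)
      · exact Or.inl hx
      · rcases (MAcc_prefixMon _ s t).1 hpx with ⟨t', rfl, ht'⟩
        rcases eq_or_ne t' [] with rfl | hne
        · exact Or.inl (by simpa using MAcc_ext s ht')
        · by_cases hp : (s ++ t') <+: spow s (max k 1)
          · obtain ⟨j, hj⟩ : ∃ j, max k 1 = j + 1 := ⟨max k 1 - 1, by omega⟩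
            rw [hj, spow_succ] at hp
            have ht'p : t' <+: spow s j := (List.prefix_append_right_inj s).1 hp
            rcases prefix_of_spow_prefix ht'p with ⟨r, hr⟩
            exact Or.inl (hr ▸ MAcc_ext r ht')
          · exact Or.inr (MAcc_sbarK_key hL s k t' hne hp)
      · exact Or.inr hK
    · rintro (hx | hK)
      · exact Or.inl (Or.inl hx)
      · exact Or.inr hK
  constructor
  · ext t
    simp only [La, Set.mem_setOf_eq]
    rw [show (Mon.yes : Mon Act) = verd true from rfl, wtrace_iff_acc, wtrace_iff_acc]
    exact main true t
  · ext t
    simp only [Lr, Set.mem_setOf_eq]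
    rw [show (Mon.no : Mon Act) = verd false from rfl, wtrace_iff_acc, wtrace_iff_acc]
    exact main false t
end

section
/- When Act = {a} is a singleton, the equation V1: x = x + a.x is sound for verdict equivalence, and moreover for every n ≥ 0 the equation x = x + a^n.x is derivable from E_v' ∪ {V1}, where a^n.x denotes x prefixed by n copies of a. -/
variable {Act : Type}

/-- `E_v' ∪ {V1}` over the singleton alphabet: `E_v` plus `O1 : yes+no = yes+no+x`
and `V1 : x = x + a.x`. -/
def Ev1 : Mon Unit → Mon Unit → Prop := fun m n =>
  EvAx m n ∨
  (m = Mon.plus Mon.yes Mon.no ∧ n = Mon.plus (Mon.plus Mon.yes Mon.no) vx) ∨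
  (m = vx ∧ n = Mon.plus vx (Mon.act () vx))

lemma wtrace_append {m n p : Mon Act} {s t : List Act}
    (h1 : WTrace m s n) (h2 : WTrace n t p) : WTrace m (s ++ t) p := by
  induction h1 with
  | nil ts =>
    cases h2 with
    | nil ts' => exact WTrace.nil (ts.trans ts')
    | cons ts' st w => exact WTrace.cons (ts.trans ts') st w
  | cons ts st w ih => exact WTrace.cons ts st (ih h2)

lemma unit_cons (s : List Unit) : (() :: s) = s ++ [()] := by
  induction s with
  | nil => rfl
  | cons a t ih => cases a; rw [List.cons_append, ← ih]

lemma tauStar_plusL {m v : Mon Act} (n : Mon Act) (ts : TauStar m v) (hv : IsVerdict v) :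
    TauStar (Mon.plus m n) v := by
  rcases (Relation.ReflTransGen.cases_head ts) with rfl | ⟨c, h, ts'⟩
  · exact Relation.ReflTransGen.single (Step.plusL (Step.verdict hv))
  · exact Relation.ReflTransGen.head (Step.plusL h) ts'

lemma wtrace_plusL {m v : Mon Act} {s : List Act} (n : Mon Act)
    (h : WTrace m s v) (hv : IsVerdict v) : WTrace (Mon.plus m n) s v := by
  cases h with
  | nil ts => exact WTrace.nil (tauStar_plusL n ts hv)
  | cons ts st w =>
    rcases (Relation.ReflTransGen.cases_head ts) with rfl | ⟨c, h', ts'⟩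
    · exact WTrace.cons Relation.ReflTransGen.refl (Step.plusL st) w
    · exact WTrace.cons (Relation.ReflTransGen.head (Step.plusL h') ts') st w

lemma wtrace_plus_inv {p v : Mon Unit} {s : List Unit} (hv : IsVerdict v)
    (h : WTrace (Mon.plus p (Mon.act () p)) s v) : WTrace p s v := by
  cases h with
  | nil ts =>
    rcases (Relation.ReflTransGen.cases_head ts) with hEq | ⟨c, h', ts'⟩
    · rw [← hEq] at hv; cases hv
    · cases h' with
      | plusL h'' => exact WTrace.nil (Relation.ReflTransGen.head h'' ts')
      | plusR h'' => cases h'' with | verdict hv' => cases hv'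
      | verdict hv' => cases hv'
  | cons ts st w =>
    rcases (Relation.ReflTransGen.cases_head ts) with hEq | ⟨c, h', ts'⟩
    · rw [← hEq] at st
      cases st with
      | plusL h'' => exact WTrace.cons Relation.ReflTransGen.refl h'' w
      | plusR h'' =>
        cases h'' with
        | act =>
          have hv1 : WTrace v [()] v :=
            WTrace.cons Relation.ReflTransGen.refl (Step.verdict hv)
              (WTrace.nil Relation.ReflTransGen.refl)
          rw [unit_cons]
          exact wtrace_append w hv1
        | verdict hv' => cases hv'
      | verdict hv' => cases hv'
    · cases h' with
      | plusL h'' => exact WTrace.cons (Relation.ReflTransGen.head h'' ts') st w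
      | plusR h'' => cases h'' with | verdict hv' => cases hv'
      | verdict hv' => cases hv'

/-- over `Act = {a}`, `V1 : x = x + a.x` is sound for verdict
equivalence, and `x = x + a^n.x` is derivable from `E_v' ∪ {V1}` for every `n`. -/
theorem stmt18 :
    (∀ σ : ℕ → Mon Unit, (∀ v, Closed (σ v)) →
        VerdEq (msubst σ vx) (msubst σ (Mon.plus vx (Mon.act () vx)))) ∧
    (∀ n : ℕ, Deriv Ev1 vx (Mon.plus vx (prefixMon (List.replicate n ()) vx))) := by
  constructor
  · intro σ _
    have key : ∀ (v : Mon Unit), IsVerdict v →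
        {s | WTrace (σ 0) s v} = {s | WTrace (Mon.plus (σ 0) (Mon.act () (σ 0))) s v} := by
      intro v hv
      ext s
      exact ⟨fun h => wtrace_plusL _ h hv, fun h => wtrace_plus_inv hv h⟩
    exact ⟨key Mon.yes IsVerdict.yes, key Mon.no IsVerdict.no⟩
  · intro n
    induction n with
    | zero =>
      have : Deriv Ev1 (Mon.plus vx vx) (vx : Mon Unit) := by
        have := Deriv.subst (fun _ => vx) (Deriv.ax (E := Ev1) (Or.inl EvAx.A3))
        simpa [msubst, vx, vy] using this
      exact Deriv.symm this
    | succ n ih =>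
      set P : Mon Unit := prefixMon (List.replicate n ()) vx with hP
      have hQ : prefixMon (List.replicate (n+1) ()) vx = Mon.act () P := rfl
      rw [hQ]
      have v1 : Deriv Ev1 P (Mon.plus P (Mon.act () P)) := by
        have := Deriv.subst (fun _ => P) (Deriv.ax (E := Ev1) (Or.inr (Or.inr ⟨rfl, rfl⟩)))
        simpa [msubst, vx] using this
      have a2 : Deriv Ev1 (Mon.plus vx (Mon.plus P (Mon.act () P)))
          (Mon.plus (Mon.plus vx P) (Mon.act () P)) := by
        have := Deriv.subst
          (fun k => if k = 0 then vx else if k = 1 then P else Mon.act () P)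
          (Deriv.ax (E := Ev1) (Or.inl EvAx.A2))
        simpa [msubst, vx, vy, vz] using this
      exact Deriv.trans ih
        (Deriv.trans (Deriv.plus (Deriv.refl vx) v1)
          (Deriv.trans a2 (Deriv.plus (Deriv.symm ih) (Deriv.refl _))))
end
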